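/- A 3-dicritical digraph does not contain O5 as a subdigraph, where O5 is the oriented graph on five vertices u, v, x, y, z whose arcs are the directed triangle x→y→z→x, the arcs u→x, u→y, u→z, the arcs x→v, y→v, z→v, and the arc u→v. -/

import Mathlib

/-- A (loopless, simple) digraph on vertex type `V`. -/
structure SimpleDigraph (V : Type) where
  Adj : V → V → Prop
  loopless : ∀ v, ¬ Adj v v

namespace SimpleDigraph

/-- A set of arcs (given as a relation) is acyclic if it admits no directed closed walk. -/
def AcyclicRel {V : Type} (A : V → V → Prop) : Prop :=
  ∀ v, ¬ Relation.TransGen A v v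

/-- A set of arcs is 2-dicolourable if the vertices can be coloured with two colours
so that each colour class induces an acyclic subdigraph. -/
def Dicolourable2Rel {V : Type} (A : V → V → Prop) : Prop :=
  ∃ φ : V → Fin 2, ∀ i : Fin 2,
    AcyclicRel (fun a b => A a b ∧ φ a = i ∧ φ b = i)

/-- A digraph is 2-dicolourable if its vertices can be coloured with two colours
so that each colour class induces an acyclic subdigraph. -/
def Dicolourable2 {V : Type} (D : SimpleDigraph V) : Prop :=
  Dicolourable2Rel D.Adj

/-- `(S, A)` describes a subdigraph of `D`: its vertex set is `S` and its arcs
are given by `A`, which must join vertices of `S` and be arcs of `D`. -/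
def IsSubdigraphOn {V : Type} (D : SimpleDigraph V) (S : Set V) (A : V → V → Prop) : Prop :=
  ∀ u v, A u v → u ∈ S ∧ v ∈ S ∧ D.Adj u v

/-- `D` is 3-dicritical: `D` is not 2-dicolourable, but every proper subdigraph of `D`
(one missing a vertex or an arc) is 2-dicolourable. -/
def Dicritical3 {V : Type} (D : SimpleDigraph V) : Prop :=
  ¬ D.Dicolourable2 ∧
    ∀ (S : Set V) (A : V → V → Prop), D.IsSubdigraphOn S A →
      (S ≠ Set.univ ∨ A ≠ D.Adj) → Dicolourable2Rel A

/-- A digraph is semi-complete if any two distinct vertices are joined by at least one arc. -/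
def SemiComplete {V : Type} (D : SimpleDigraph V) : Prop :=
  ∀ u v : V, u ≠ v → D.Adj u v ∨ D.Adj v u

/-- A tournament is a semi-complete digraph with no digon. -/
def IsTournament {V : Type} (D : SimpleDigraph V) : Prop :=
  D.SemiComplete ∧ ∀ u v : V, ¬ (D.Adj u v ∧ D.Adj v u)

/-- Isomorphism of digraphs. -/
def Iso {V W : Type} (D : SimpleDigraph V) (E : SimpleDigraph W) : Prop :=
  ∃ e : V ≃ W, ∀ u v : V, D.Adj u v ↔ E.Adj (e u) (e v)

/-- `D` contains (a copy of) `H` as a subdigraph. -/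
def ContainsSub {V W : Type} (D : SimpleDigraph V) (H : SimpleDigraph W) : Prop :=
  ∃ f : W → V, Function.Injective f ∧ ∀ a b, H.Adj a b → D.Adj (f a) (f b)

/-- `D` contains (a copy of) `H` as an induced subdigraph. -/
def ContainsInduced {V W : Type} (D : SimpleDigraph V) (H : SimpleDigraph W) : Prop :=
  ∃ f : W → V, Function.Injective f ∧ ∀ a b, H.Adj a b ↔ D.Adj (f a) (f b)

end SimpleDigraph

/-- The oriented graph `O5` on vertices `u = 0`, `v = 1`, `x = 2`, `y = 3`, `z = 4`:
the directed triangle `x → y → z → x`, the arcs `u → x, u → y, u → z`,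
the arcs `x → v, y → v, z → v`, and the arc `u → v`. -/
def digraphO5 : SimpleDigraph (Fin 5) :=
  ⟨fun a b => (a.val, b.val) ∈
      [(2,3),(3,4),(4,2),(0,2),(0,3),(0,4),(2,1),(3,1),(4,1),(0,1)], by decide⟩

lemma O5_adj {a b : Fin 5}
    (h : (a.val, b.val) ∈
      [(2,3),(3,4),(4,2),(0,2),(0,3),(0,4),(2,1),(3,1),(4,1),(0,1)]) :
    digraphO5.Adj a b := h

open Relation in
lemma transGen_union_single_aux {V : Type} {R : V → V → Prop} {a b : V} {P : Prop}
    {x y : V} (h : TransGen (fun p q => R p q ∨ (p = a ∧ q = b ∧ P)) x y) :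
    TransGen R x y ∨ (ReflTransGen R x a ∧ P ∧ ReflTransGen R b y) := by
  induction h with
  | single h =>
    rcases h with h | ⟨rfl, rfl, hP⟩
    · exact Or.inl (TransGen.single h)
    · exact Or.inr ⟨ReflTransGen.refl, hP, ReflTransGen.refl⟩
  | tail _ hstep ih =>
    rcases hstep with h | ⟨rfl, rfl, hP⟩
    · rcases ih with h1 | ⟨h1, hP', h2⟩
      · exact Or.inl (h1.tail h)
      · exact Or.inr ⟨h1, hP', h2.tail h⟩
    · rcases ih with h1 | ⟨h1, hP', h2⟩
      · exact Or.inr ⟨h1.to_reflTransGen, hP, ReflTransGen.refl⟩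
      · exact Or.inr ⟨h1, hP, ReflTransGen.refl⟩

open Relation in
/-- A 3-dicritical digraph does not contain `O5` as a subdigraph. -/
theorem dicritical3_O5_free
    {V : Type} [Fintype V] (D : SimpleDigraph V) (hD : D.Dicritical3) :
    ¬ D.ContainsSub digraphO5 := by
  rintro ⟨f, hinj, hadj⟩
  have hne : ∀ a b : Fin 5, a ≠ b → f a ≠ f b := fun a b hab h => hab (hinj h)
  set A : V → V → Prop := fun x y => D.Adj x y ∧ ¬(x = f 0 ∧ y = f 1) with hAdef
  have hsub : D.IsSubdigraphOn Set.univ A := fun u v h => ⟨trivial, trivial, h.1⟩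
  have hAne : A ≠ D.Adj := by
    intro h
    have h01 : D.Adj (f 0) (f 1) := hadj 0 1 (O5_adj (by decide))
    rw [← h] at h01
    exact h01.2 ⟨rfl, rfl⟩
  obtain ⟨φ, hφ⟩ := hD.2 Set.univ A hsub (Or.inr hAne)
  have hnc := hD.1
  rw [SimpleDigraph.Dicolourable2, SimpleDigraph.Dicolourable2Rel] at hnc
  push_neg at hnc
  obtain ⟨i, hi⟩ := hnc φ
  rw [SimpleDigraph.AcyclicRel] at hi
  push_neg at hi
  obtain ⟨v0, hv0⟩ := hi
  have hsplit : ∀ x y : V, (D.Adj x y ∧ φ x = i ∧ φ y = i) →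
      ((A x y ∧ φ x = i ∧ φ y = i) ∨
        (x = f 0 ∧ y = f 1 ∧ (φ (f 0) = i ∧ φ (f 1) = i))) := by
    rintro x y ⟨hxy, hx, hy⟩
    by_cases h : x = f 0 ∧ y = f 1
    · exact Or.inr ⟨h.1, h.2, h.1 ▸ hx, h.2 ▸ hy⟩
    · exact Or.inl ⟨⟨hxy, h⟩, hx, hy⟩
  have hv0' : TransGen (fun p q => (A p q ∧ φ p = i ∧ φ q = i) ∨
      (p = f 0 ∧ q = f 1 ∧ (φ (f 0) = i ∧ φ (f 1) = i))) v0 v0 :=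
    TransGen.mono hsplit v0 v0 hv0
  rcases transGen_union_single_aux hv0' with h | ⟨h1, ⟨hu, hv⟩, h2⟩
  · exact hφ i v0 h
  have hba : ReflTransGen (fun p q => A p q ∧ φ p = i ∧ φ q = i) (f 1) (f 0) := h2.trans h1
  by_cases hw : φ (f 2) = i ∨ φ (f 3) = i ∨ φ (f 4) = i
  · obtain ⟨w, hw1, hwadj1, hwadj2, hwne0, hwne1⟩ :
        ∃ w : Fin 5, φ (f w) = i ∧ ((0:Fin 5).val, w.val) ∈ [(2,3),(3,4),(4,2),(0,2),(0,3),(0,4),(2,1),(3,1),(4,1),(0,1)] ∧ (w.val, (1:Fin 5).val) ∈ [(2,3),(3,4),(4,2),(0,2),(0,3),(0,4),(2,1),(3,1),(4,1),(0,1)] ∧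
          w ≠ 0 ∧ w ≠ 1 := by
      rcases hw with h | h | h
      exacts [⟨2, h, by decide, by decide, by decide, by decide⟩,
        ⟨3, h, by decide, by decide, by decide, by decide⟩,
        ⟨4, h, by decide, by decide, by decide, by decide⟩]
    apply hφ i (f 0)
    refine TransGen.head ⟨⟨hadj 0 w (O5_adj hwadj1), ?_⟩, hu, hw1⟩
      (TransGen.head' ⟨⟨hadj w 1 (O5_adj hwadj2), ?_⟩, hw1, hv⟩ hba)
    · rintro ⟨-, h⟩; exact hne w 1 hwne1 h
    · rintro ⟨h, -⟩; exact hne w 0 hwne0 h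
  · push_neg at hw
    obtain ⟨h2i, h3i, h4i⟩ := hw
    have heq : ∀ a b : Fin 2, a ≠ i → b ≠ i → a = b := by
      have : ∀ (j a b : Fin 2), a ≠ j → b ≠ j → a = b := by decide
      exact this i
    have e32 : φ (f 3) = φ (f 2) := heq _ _ h3i h2i
    have e42 : φ (f 4) = φ (f 2) := heq _ _ h4i h2i
    apply hφ (φ (f 2)) (f 2)
    refine TransGen.head ⟨⟨hadj 2 3 (O5_adj (by decide)), ?_⟩, rfl, e32⟩
      (TransGen.head ⟨⟨hadj 3 4 (O5_adj (by decide)), ?_⟩, e32, e42⟩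
        (TransGen.single ⟨⟨hadj 4 2 (O5_adj (by decide)), ?_⟩, e42, rfl⟩))
    · rintro ⟨h, -⟩; exact hne 2 0 (by decide) h
    · rintro ⟨h, -⟩; exact hne 3 0 (by decide) h
    · rintro ⟨h, -⟩; exact hne 4 0 (by decide) h
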